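/- Fix N ≥ 2. If (x, y) ∈ G_{1,N} (the μ_{1,N}-quotient), then (y₁, …, y_{N−1}) belongs to the symmetrized polydisc 𝔾_{N−1}, and consequently |y₁| < N − 1. -/

import Mathlib

open BigOperators

/-- `P_n(z; x) = Σ_{j=0}^{n−1} (−1)^j x_{j+1} z^j`. -/
noncomputable def Pp {N : ℕ} (x : Fin N → ℂ) (z : ℂ) : ℂ :=
  ∑ j : Fin N, (-1 : ℂ) ^ (j : ℕ) * x j * z ^ (j : ℕ)

/-- `Q_n(z; y) = 1 + Σ_{j=1}^{n−1} (−1)^j y_j z^j`. -/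
noncomputable def Qq {M : ℕ} (y : Fin M → ℂ) (z : ℂ) : ℂ :=
  1 + ∑ j : Fin M, (-1 : ℂ) ^ ((j : ℕ) + 1) * y j * z ^ ((j : ℕ) + 1)

/-- Membership in the symmetrized polydisc `𝔾_N`: all roots of
`z^N + Σ_{j=1}^N (−1)^j s_j z^{N−j}` lie in the open unit disc. -/
def memSymPolydisc {N : ℕ} (s : Fin N → ℂ) : Prop :=
  ∀ z : ℂ,
    z ^ N + ∑ j : Fin N, (-1 : ℂ) ^ ((j : ℕ) + 1) * s j * z ^ (N - 1 - (j : ℕ)) = 0 →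
      ‖z‖ < 1

/-- If `(x,y) ∈ G_{1,N}`, then `(y₁,…,y_{N−1}) ∈ 𝔾_{N−1}`, and `|y₁| < N − 1`. -/
theorem stmt10 (m : ℕ) (x : Fin (m+2) → ℂ) (y : Fin (m+1) → ℂ)
    (h : ∀ z w : ℂ, ‖z‖ ≤ 1 → ‖w‖ ≤ 1 → Qq y z - w * Pp x z ≠ 0) :
    memSymPolydisc y ∧ ‖y 0‖ < (m + 1 : ℝ) := by
  have hmem : memSymPolydisc y := by
    intro z hz
    by_contra hzb
    push_neg at hzb
    have hz0 : z ≠ 0 := by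
      intro h0
      rw [h0] at hzb
      simp at hzb
      linarith
    set u := z⁻¹ with hu_def
    have hu : ‖u‖ ≤ 1 := by
      rw [hu_def, norm_inv]
      exact inv_le_one_of_one_le₀ hzb
    have key : z ^ (m+1) * Qq y u
        = z ^ (m+1) + ∑ j : Fin (m+1),
            (-1:ℂ) ^ ((j:ℕ)+1) * y j * z ^ (m + 1 - 1 - (j:ℕ)) := by
      rw [Qq, mul_add, mul_one, Finset.mul_sum]
      congr 1
      refine Finset.sum_congr rfl fun j _ => ?_
      have hj : (j:ℕ) ≤ m := Nat.lt_succ_iff.mp j.isLt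
      have h1 : z ^ (m+1) = z ^ (m + 1 - 1 - (j:ℕ)) * z ^ ((j:ℕ)+1) := by
        rw [← pow_add]; congr 1; omega
      have h2 : z ^ ((j:ℕ)+1) * u ^ ((j:ℕ)+1) = 1 := by
        rw [hu_def, ← mul_pow, mul_inv_cancel₀ hz0, one_pow]
      calc z ^ (m+1) * ((-1:ℂ) ^ ((j:ℕ)+1) * y j * u ^ ((j:ℕ)+1))
          = (-1:ℂ) ^ ((j:ℕ)+1) * y j * z ^ (m + 1 - 1 - (j:ℕ))
              * (z ^ ((j:ℕ)+1) * u ^ ((j:ℕ)+1)) := by rw [h1]; ring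
        _ = (-1:ℂ) ^ ((j:ℕ)+1) * y j * z ^ (m + 1 - 1 - (j:ℕ)) := by
              rw [h2, mul_one]
    have hQ : Qq y u = 0 := by
      have hzpow : z ^ (m+1) ≠ 0 := pow_ne_zero _ hz0
      have := key.trans hz
      exact (mul_eq_zero.mp this).resolve_left hzpow
    have := h u 0 hu (by simp)
    simp [hQ] at this
  refine ⟨hmem, ?_⟩
  -- Polynomial part
  classical
  set p : Polynomial ℂ :=
    Polynomial.X ^ (m+1) +
      ∑ j : Fin (m+1), Polynomial.C ((-1:ℂ) ^ ((j:ℕ)+1) * y j) * Polynomial.X ^ (m - (j:ℕ))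
    with hp_def
  have heval : ∀ z : ℂ, p.eval z
      = z ^ (m+1) + ∑ j : Fin (m+1), (-1:ℂ) ^ ((j:ℕ)+1) * y j * z ^ (m + 1 - 1 - (j:ℕ)) := by
    intro z
    rw [hp_def]
    simp [Polynomial.eval_finset_sum, Nat.succ_sub_one]
  have hdegsum : (∑ j : Fin (m+1), Polynomial.C ((-1:ℂ) ^ ((j:ℕ)+1) * y j)
      * Polynomial.X ^ (m - (j:ℕ))).degree < ((m+1 : ℕ) : WithBot ℕ) := by
    refine lt_of_le_of_lt (Polynomial.degree_sum_le _ _) ?_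
    rw [Finset.sup_lt_iff (by exact WithBot.bot_lt_coe _)]
    intro j _
    refine lt_of_le_of_lt (Polynomial.degree_C_mul_X_pow_le _ _) ?_
    exact_mod_cast Nat.lt_succ_of_le (Nat.sub_le _ _)
  have hmonic : p.Monic := Polynomial.monic_X_pow_add hdegsum
  have hdeg : p.natDegree = m + 1 := by
    have hd : p.degree = ((m+1 : ℕ) : WithBot ℕ) := by
      rw [hp_def, Polynomial.degree_add_eq_left_of_degree_lt
        (by rwa [Polynomial.degree_X_pow]), Polynomial.degree_X_pow]
    exact Polynomial.natDegree_eq_of_degree_eq_some hd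
  have hsplits : p.Splits := IsAlgClosed.splits p
  have hcard : p.roots.card = m + 1 := by
    rw [Polynomial.splits_iff_card_roots.mp hsplits, hdeg]
  have hnext : p.nextCoeff = -(y 0) := by
    rw [Polynomial.nextCoeff, hdeg]
    simp only [Nat.succ_ne_zero, if_false, Nat.add_sub_cancel]
    rw [hp_def]
    rw [Polynomial.coeff_add, Polynomial.coeff_X_pow, if_neg (by omega),
      Polynomial.finset_sum_coeff]
    simp only [Polynomial.coeff_C_mul, Polynomial.coeff_X_pow]
    rw [Finset.sum_eq_single (0 : Fin (m+1))]
    · simp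
    · intro j _ hj
      have hj' : (j:ℕ) ≠ 0 := fun hc => hj (Fin.ext hc)
      rw [if_neg (by omega), mul_zero]
    · simp
  have hsum : p.roots.sum = y 0 := by
    have := hsplits.nextCoeff_eq_neg_sum_roots_of_monic hmonic
    rw [hnext] at this
    exact (neg_inj.mp this).symm
  have hroots : ∀ r ∈ p.roots, ‖r‖ < 1 := by
    intro r hr
    have hr0 : p.eval r = 0 := (Polynomial.mem_roots hmonic.ne_zero).mp hr
    exact hmem r (by rw [← heval r]; exact hr0)
  have habs : ‖y 0‖ ≤ (p.roots.map (‖·‖)).sum := by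
    rw [← hsum]
    simpa using norm_multiset_sum_le p.roots
  have hlt : (p.roots.map (‖·‖)).sum < (m + 1 : ℝ) := by
    have hne : p.roots ≠ 0 := by
      intro hc; rw [hc] at hcard; simp at hcard
    have := Multiset.sum_lt_sum_of_nonempty hne
      (g := fun _ => (1:ℝ)) hroots
    rw [Multiset.map_const', Multiset.sum_replicate, hcard] at this
    simpa using this
  linarith
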